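/- Let A, B₁, B₂ be finite nonempty sets in a commutative group and let S ⊆ B₁ + B₂ be nonempty. Then |S + A|² ≤ |S| · |A + B₁| · |A + B₂|. -/

import Mathlib

open Pointwise

theorem restricted_sum_inequality {G : Type*} [AddCommGroup G] [DecidableEq G]
    (A B₁ B₂ S : Finset G) (hA : A.Nonempty) (hB₁ : B₁.Nonempty) (hB₂ : B₂.Nonempty)
    (hS : S.Nonempty) (hSB : S ⊆ B₁ + B₂) :
    (S + A).card ^ 2 ≤ S.card * (A + B₁).card * (A + B₂).card := by
  classical
  -- choice functions for decompositions
  have hdec : ∀ x ∈ S + A, ∃ p : G × G, p.1 ∈ S ∧ p.2 ∈ A ∧ p.1 + p.2 = x := by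
    intro x hx
    rw [Finset.mem_add] at hx
    obtain ⟨s, hs, a, ha, h⟩ := hx
    exact ⟨(s, a), hs, ha, h⟩
  choose! p hp1 hp2 hp3 using hdec
  have hSdec : ∀ s ∈ S, ∃ q : G × G, q.1 ∈ B₁ ∧ q.2 ∈ B₂ ∧ q.1 + q.2 = s := by
    intro s hs
    have := hSB hs
    rw [Finset.mem_add] at this
    obtain ⟨b₁, hb₁, b₂, hb₂, h⟩ := this
    exact ⟨(b₁, b₂), hb₁, hb₂, h⟩
  choose! q hq1 hq2 hq3 using hSdec
  set T := S + A with hT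
  -- u x = x - b₂(s(x)) ∈ A + B₁ for x ∈ T
  set u : G → G := fun x => x - (q (p x).1).2 with hu
  have huT : ∀ x ∈ T, u x ∈ A + B₁ := by
    intro x hx
    have h1 := hp1 x hx
    have h3 := hp3 x hx
    have h4 := hq3 _ h1
    rw [Finset.mem_add]
    refine ⟨(p x).2, hp2 x hx, (q (p x).1).1, hq1 _ h1, ?_⟩
    simp only [hu]
    set s := (p x).1 with hsdef
    set a := (p x).2 with hadef
    set c₁ := (q s).1 with hc1
    set c₂ := (q s).2 with hc2
    -- h3 : s + a = x, h4 : c₁ + c₂ = s; goal : a + c₁ = x - c₂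
    rw [eq_sub_iff_add_eq, ← h3, ← h4]
    abel
  -- the pair set
  set Pp : Finset (G × G) := (T ×ˢ T).filter (fun z => u z.1 = u z.2) with hPp
  -- Step 1: T.card ^ 2 ≤ (T.image u).card * Pp.card
  have key1 : T.card ^ 2 ≤ (T.image u).card * Pp.card := by
    have hfib : T.card = ∑ v ∈ T.image u, (T.filter (fun x => u x = v)).card :=
      Finset.card_eq_sum_card_fiberwise (fun x hx => Finset.mem_image_of_mem u hx)
    have hPpcard : Pp.card = ∑ v ∈ T.image u, (T.filter (fun x => u x = v)).card ^ 2 := by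
      have : Pp.card = ∑ v ∈ T.image u, (Pp.filter (fun z => u z.1 = v)).card :=
        Finset.card_eq_sum_card_fiberwise (by
          intro z hz
          simp only [Finset.mem_coe, hPp, Finset.mem_filter, Finset.mem_product] at hz
          exact Finset.mem_image_of_mem u hz.1.1)
      rw [this]
      refine Finset.sum_congr rfl fun v hv => ?_
      have : Pp.filter (fun z => u z.1 = v)
          = (T.filter (fun x => u x = v)) ×ˢ (T.filter (fun x => u x = v)) := by
        ext z
        simp only [hPp, Finset.mem_filter, Finset.mem_product]
        constructor
        · rintro ⟨⟨⟨h1, h2⟩, h3⟩, h4⟩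
          exact ⟨⟨h1, h4⟩, h2, h3 ▸ h4⟩
        · rintro ⟨⟨h1, h2⟩, h3, h4⟩
          exact ⟨⟨⟨h1, h3⟩, h2.trans h4.symm⟩, h2⟩
      rw [this, Finset.card_product, sq]
    -- Cauchy-Schwarz over ℤ then cast back
    have cs : ((∑ v ∈ T.image u, (T.filter (fun x => u x = v)).card : ℕ) : ℤ) ^ 2 ≤
        ((T.image u).card : ℤ) * ∑ v ∈ T.image u, ((T.filter (fun x => u x = v)).card : ℤ) ^ 2 := by
      push_cast
      exact sq_sum_le_card_mul_sum_sq
    rw [hfib, hPpcard]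
    have : ((∑ v ∈ T.image u, (T.filter (fun x => u x = v)).card) ^ 2 : ℤ) ≤
        (((T.image u).card * ∑ v ∈ T.image u, (T.filter (fun x => u x = v)).card ^ 2 : ℕ) : ℤ) := by
      push_cast
      push_cast at cs
      exact cs
    exact_mod_cast this
  -- Step 2
  have key2 : (T.image u).card ≤ (A + B₁).card :=
    Finset.card_le_card (by
      intro v hv
      obtain ⟨x, hx, rfl⟩ := Finset.mem_image.1 hv
      exact huT x hx)
  -- Step 3: Pp.card ≤ S.card * (A + B₂).card
  have key3 : Pp.card ≤ S.card * (A + B₂).card := by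
    rw [← Finset.card_product]
    apply Finset.card_le_card_of_injOn (fun z => ((p z.1).1, z.2 - (q (p z.1).1).1))
    · intro z hz
      simp only [Finset.mem_coe, hPp, Finset.mem_filter, Finset.mem_product] at hz
      obtain ⟨⟨hz1, hz2⟩, hz3⟩ := hz
      have hs1 : (p z.1).1 ∈ S := hp1 _ hz1
      have hs2 : (p z.2).1 ∈ S := hp1 _ hz2
      simp only [Finset.mem_coe, Finset.mem_product]
      refine ⟨hs1, ?_⟩
      rw [Finset.mem_add]
      refine ⟨(p z.1).2, hp2 _ hz1, (q (p z.2).1).2, hq2 _ hs2, ?_⟩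
      -- z.2 - b₁(s z.1) = a(z.1) + b₂(s z.2)
      -- from hz3 : z.1 - b₂(s z.1) = z.2 - b₂(s z.2)
      have e1 : z.1 - (q (p z.1).1).2 = z.2 - (q (p z.2).1).2 := hz3
      have e2 : (p z.1).1 + (p z.1).2 = z.1 := hp3 _ hz1
      have e3 : (q (p z.1).1).1 + (q (p z.1).1).2 = (p z.1).1 := hq3 _ hs1
      set s := (p z.1).1 with hsdef
      set a := (p z.1).2 with hadef
      set c₁ := (q s).1 with hc1
      set c₂ := (q s).2 with hc2
      set d₂ := (q (p z.2).1).2 with hd2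
      -- goal : a + d₂ = z.2 - c₁
      have hz2eq : z.2 = z.1 - c₂ + d₂ := sub_eq_iff_eq_add.mp e1.symm
      rw [hz2eq, ← e2, ← e3]
      abel
    · intro z hz z' hz' heq
      simp only [Finset.mem_coe, hPp, Finset.mem_filter, Finset.mem_product] at hz hz'
      obtain ⟨⟨hz1, hz2⟩, hz3⟩ := hz
      obtain ⟨⟨hz1', hz2'⟩, hz3'⟩ := hz'
      simp only [Prod.mk.injEq] at heq
      obtain ⟨hs, hw⟩ := heq
      have h2 : z.2 = z'.2 := by
        have := hw
        rw [hs] at this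
        exact sub_left_injective this
      have h1 : z.1 = z'.1 := by
        have e : z.1 = z.2 - (q (p z.2).1).2 + (q (p z.1).1).2 := by
          have := hz3; simp only [hu] at this
          rw [← this]; abel
        have e' : z'.1 = z'.2 - (q (p z'.2).1).2 + (q (p z'.1).1).2 := by
          have := hz3'; simp only [hu] at this
          rw [← this]; abel
        rw [e, e', h2, hs]
      exact Prod.ext h1 h2
  calc T.card ^ 2 ≤ (T.image u).card * Pp.card := key1
    _ ≤ (A + B₁).card * (S.card * (A + B₂).card) := Nat.mul_le_mul key2 key3
    _ = S.card * (A + B₁).card * (A + B₂).card := by ring
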